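/- Let C and D be categories, A and B objects of C, and let L ⊆ (A ⟶ B) be a regular language of arrows in C. If F : C ⥤ D is a finitary ULF functor, then the image F(L) = { F.map w | w ∈ L } ⊆ (F.obj A ⟶ F.obj B) is a regular language of arrows in D. -/

import Mathlib

open CategoryTheory

universe vq uq vc uc v₁ u₁ v₂ u₂ v₃ u₃ v u v' u'

/-- A functor `p : D ⥤ C` has the unique lifting of factorizations property (is ULF) if
every factorization of the image of a morphism lifts uniquely. -/
def IsULF {D : Type u} {C : Type u'} [Category.{v} D] [Category.{v'} C] (p : D ⥤ C) : Prop :=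
  ∀ ⦃X Y : D⦄ (α : X ⟶ Y) ⦃B : C⦄ (u : p.obj X ⟶ B) (v : B ⟶ p.obj Y),
    p.map α = u ≫ v →
    ∃! t : Σ (Z : D), (X ⟶ Z) × (Z ⟶ Y),
      ∃ e : p.obj t.1 = B,
        t.2.1 ≫ t.2.2 = α ∧ p.map t.2.1 ≫ eqToHom e = u ∧ p.map t.2.2 = eqToHom e ≫ v

/-- A functor `p : D ⥤ C` is finitary if its fibers over objects and over morphisms
are all finite. -/
def IsFinitary {D : Type u} {C : Type u'} [Category.{v} D] [Category.{v'} C]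
    (p : D ⥤ C) : Prop :=
  (∀ A : C, { X : D | p.obj X = A }.Finite) ∧
    ∀ (A B : C) (w : A ⟶ B),
      { t : Σ (X : D) (Y : D), X ⟶ Y |
        ∃ (hX : p.obj t.1 = A) (hY : p.obj t.2.1 = B),
          p.map t.2.2 = eqToHom hX ≫ w ≫ eqToHom hY.symm }.Finite

/-- A language of arrows `L ⊆ C(A,B)` is regular if it is the language recognized by a
nondeterministic finite-state automaton over `C`, i.e. a finitary ULF functor `p : Q ⥤ C`
with chosen initial and accepting states lying over `A` and `B`. -/
def IsRegularLang.{w₁, w₂, w₃, w₄} {C : Type w₄} [Category.{w₃} C] {A B : C}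
    (L : Set (A ⟶ B)) : Prop :=
  ∃ (Q : Type w₂) (_ : Category.{w₁} Q) (p : Q ⥤ C) (q₀ qf : Q)
    (h₀ : p.obj q₀ = A) (hf : p.obj qf = B),
    IsULF p ∧ IsFinitary p ∧
    L = { w : A ⟶ B | ∃ α : q₀ ⟶ qf, p.map α = eqToHom h₀ ≫ w ≫ eqToHom hf.symm }



section Helpers
universe hv hu hv' hu' hv'' hu''
variable {Q : Type hu} {C : Type hu'} {D : Type hu''}
variable [Category.{hv} Q] [Category.{hv'} C] [Category.{hv''} D]

lemma sigma_triple_eq {X Y Z Z' : C}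
    {a : X ⟶ Z} {b : Z ⟶ Y} {a' : X ⟶ Z'} {b' : Z' ⟶ Y}
    (h : (⟨Z, a, b⟩ : Σ W : C, (X ⟶ W) × (W ⟶ Y)) = ⟨Z', a', b'⟩) :
    ∃ e : Z = Z', a ≫ eqToHom e = a' ∧ b = eqToHom e ≫ b' := by
  obtain ⟨h1, h2⟩ := Sigma.mk.inj_iff.mp h
  subst h1
  obtain ⟨ha, hb⟩ := Prod.mk.inj (eq_of_heq h2)
  exact ⟨rfl, by simpa using ha, by simpa using hb⟩

lemma isULF_comp {p : Q ⥤ C} {F : C ⥤ D} (hp : IsULF p) (hF : IsULF F) :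
    IsULF (p ⋙ F) := by
  intro X Y α B u v h
  obtain ⟨⟨Z', β', γ'⟩, ⟨e, h1, h2, h3⟩, huniq⟩ := hF (p.map α) u v h
  obtain ⟨⟨Z, β, γ⟩, ⟨e', h1', h2', h3'⟩, huniq'⟩ := hp α β' γ' h1.symm
  refine ⟨⟨Z, β, γ⟩, ⟨(congrArg F.obj e').trans e, h1', ?_, ?_⟩, ?_⟩
  · show F.map (p.map β) ≫ _ = u
    rw [← eqToHom_trans (congrArg F.obj e') e, ← Category.assoc, ← eqToHom_map F e',
      ← F.map_comp, h2', h2]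
  · show F.map (p.map γ) = _
    rw [← eqToHom_trans (congrArg F.obj e') e, Category.assoc, ← h3, ← eqToHom_map F e',
      ← F.map_comp, h3']
  · rintro ⟨Z₂, β₂, γ₂⟩ ⟨e₂, k1, k2, k3⟩
    have hsig := huniq ⟨p.obj Z₂, p.map β₂, p.map γ₂⟩
      ⟨e₂, by rw [← p.map_comp, k1], k2, k3⟩
    obtain ⟨f, hf1, hf2⟩ := sigma_triple_eq hsig
    exact huniq' ⟨Z₂, β₂, γ₂⟩ ⟨f, k1, hf1, hf2⟩

lemma isFinitary_comp {p : Q ⥤ C} {F : C ⥤ D} (hp : IsFinitary p) (hF : IsFinitary F) :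
    IsFinitary (p ⋙ F) := by
  constructor
  · intro d
    refine Set.Finite.subset ((hF.1 d).biUnion (fun A _ => hp.1 A)) ?_
    intro X hX
    exact Set.mem_biUnion (x := p.obj X) hX rfl
  · intro d d' w
    refine Set.Finite.subset ((hF.2 d d' w).biUnion
      (fun s _ => hp.2 s.1 s.2.1 s.2.2)) ?_
    rintro ⟨X, Y, α⟩ ⟨hX, hY, hmap⟩
    refine Set.mem_biUnion (x := (⟨p.obj X, p.obj Y, p.map α⟩ : Σ (A : C) (B : C), A ⟶ B))
      ?_ ⟨rfl, rfl, by simp⟩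
    exact ⟨hX, hY, hmap⟩

end Helpers

/-- Regular languages of arrows are closed under image along a finitary ULF functor. -/
theorem isRegularLang_image {C : Type u₁} [Category.{v₁} C] {D : Type u₂} [Category.{v₂} D]
    {A B : C} (L : Set (A ⟶ B)) (F : C ⥤ D) (hULF : IsULF F) (hFin : IsFinitary F)
    (hL : IsRegularLang.{vq, uq} L) :
    IsRegularLang.{vq, uq} ((fun w => F.map w) '' L : Set (F.obj A ⟶ F.obj B)) := by
  obtain ⟨Q, instQ, p, q₀, qf, h₀, hf, hULFp, hFinp, hLang⟩ := hL
  refine ⟨Q, instQ, p ⋙ F, q₀, qf, congrArg F.obj h₀, congrArg F.obj hf,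
    isULF_comp hULFp hULF, isFinitary_comp hFinp hFin, ?_⟩
  ext w'
  simp only [Set.mem_image, Set.mem_setOf_eq]
  constructor
  · rintro ⟨w, hw, rfl⟩
    rw [hLang] at hw
    obtain ⟨α, hα⟩ := hw
    refine ⟨α, ?_⟩
    show F.map (p.map α) = _
    rw [hα]
    simp [eqToHom_map]
  · rintro ⟨α, hα⟩
    replace hα : F.map (p.map α) = eqToHom (congrArg F.obj h₀) ≫ w' ≫
        eqToHom (congrArg F.obj hf).symm := hα
    refine ⟨eqToHom h₀.symm ≫ p.map α ≫ eqToHom hf, ?_, ?_⟩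
    · rw [hLang]
      exact ⟨α, by simp⟩
    · show F.map _ = w'
      rw [F.map_comp, F.map_comp, eqToHom_map, eqToHom_map, hα]
      simp
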